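/- Let A ∈ ℂ^{n×n}, B ∈ ℂ^{n×m}, C ∈ ℂ^{p×n}, D ∈ ℂ^{p×m}, E ∈ ℂ^{n×n} with E invertible, and let ε > 0 with ε‖D‖₂ < 1. For λ ∈ ℂ not an eigenvalue of the pencil (A,E) (i.e., λE - A invertible), define the transfer function G(λ) = C(λE - A)⁻¹B + D. Then ‖G(λ)‖₂ ≥ ε⁻¹ if and only if there exists Δ ∈ ℂ^{m×p} with ‖Δ‖₂ ≤ ε such that λ is an eigenvalue of the pencil (M(Δ), E), where M(Δ) = A + BΔ(I - DΔ)⁻¹C. -/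

import Mathlib

open Matrix Filter Set
open scoped ComplexConjugate

noncomputable def specNorm {p m : ℕ} (A : Matrix (Fin p) (Fin m) ℂ) : ℝ :=
  ‖(Matrix.toEuclideanLin A).toContinuousLinearMap‖

noncomputable def pertSys {n m p : ℕ} (A : Matrix (Fin n) (Fin n) ℂ) (B : Matrix (Fin n) (Fin m) ℂ)
    (C : Matrix (Fin p) (Fin n) ℂ) (D : Matrix (Fin p) (Fin m) ℂ)
    (Δ : Matrix (Fin m) (Fin p) ℂ) : Matrix (Fin n) (Fin n) ℂ :=
  A + B * Δ * (1 - D * Δ)⁻¹ * C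

noncomputable def svSet {n m p : ℕ} (ε : ℝ) (A : Matrix (Fin n) (Fin n) ℂ)
    (B : Matrix (Fin n) (Fin m) ℂ) (C : Matrix (Fin p) (Fin n) ℂ)
    (D : Matrix (Fin p) (Fin m) ℂ) (E : Matrix (Fin n) (Fin n) ℂ) : Set ℂ :=
  {z | ∃ Δ : Matrix (Fin m) (Fin p) ℂ, specNorm Δ ≤ ε ∧ (z • E - pertSys A B C D Δ).det = 0}

noncomputable def transferFn {n m p : ℕ} (A : Matrix (Fin n) (Fin n) ℂ)
    (B : Matrix (Fin n) (Fin m) ℂ) (C : Matrix (Fin p) (Fin n) ℂ)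
    (D : Matrix (Fin p) (Fin m) ℂ) (E : Matrix (Fin n) (Fin n) ℂ) (z : ℂ) :
    Matrix (Fin p) (Fin m) ℂ :=
  C * (z • E - A)⁻¹ * B + D

section Aux

open scoped Matrix.Norms.L2Operator

lemma specNorm_eq_l2norm {a b : ℕ} (A : Matrix (Fin a) (Fin b) ℂ) : specNorm A = ‖A‖ := rfl

lemma specNorm_nonneg {a b : ℕ} (A : Matrix (Fin a) (Fin b) ℂ) : 0 ≤ specNorm A :=
  norm_nonneg _

lemma specNorm_mul_le {a b c : ℕ} (A : Matrix (Fin a) (Fin b) ℂ) (B : Matrix (Fin b) (Fin c) ℂ) :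
    specNorm (A * B) ≤ specNorm A * specNorm B := by
  simpa only [specNorm_eq_l2norm] using Matrix.l2_opNorm_mul A B

lemma specNorm_mulVec_le {a b : ℕ} (A : Matrix (Fin a) (Fin b) ℂ) (x : EuclideanSpace ℂ (Fin b)) :
    ‖((WithLp.equiv 2 (Fin a → ℂ)).symm (A *ᵥ (WithLp.equiv 2 (Fin b → ℂ)) x) :
        EuclideanSpace ℂ (Fin a))‖ ≤ specNorm A * ‖x‖ := by
  show ‖(Matrix.toEuclideanLin A).toContinuousLinearMap x‖ ≤ specNorm A * ‖x‖
  exact (Matrix.toEuclideanLin A).toContinuousLinearMap.le_opNorm x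

/-- If `specNorm N < 1` then `1 - N` has nonzero determinant. -/
lemma det_one_sub_ne_zero {q : ℕ} (N : Matrix (Fin q) (Fin q) ℂ) (h : specNorm N < 1) :
    (1 - N).det ≠ 0 := by
  intro h0
  rw [← Matrix.exists_mulVec_eq_zero_iff] at h0
  obtain ⟨v, hv, hv0⟩ := h0
  have hNv : N *ᵥ v = v := by
    rwa [Matrix.sub_mulVec, Matrix.one_mulVec, sub_eq_zero, eq_comm] at hv0
  set w : EuclideanSpace ℂ (Fin q) := (WithLp.equiv 2 (Fin q → ℂ)).symm v with hw
  have hwnorm : ‖w‖ ≤ specNorm N * ‖w‖ := by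
    have := specNorm_mulVec_le N w
    rw [hw] at this
    simp only [Equiv.apply_symm_apply] at this
    rwa [hNv] at this
  have hw0 : 0 < ‖w‖ := by
    rw [norm_pos_iff]
    intro hcon
    exact hv ((WithLp.equiv 2 (Fin q → ℂ)).symm.injective (by simpa [hw] using hcon))
  nlinarith

/-- Norm attainment for the matrix operator norm. -/
lemma specNorm_attained {a b : ℕ} (G : Matrix (Fin a) (Fin b) ℂ) (h : 0 < specNorm G) :
    ∃ u : EuclideanSpace ℂ (Fin b), ‖u‖ = 1 ∧
      ‖((WithLp.equiv 2 (Fin a → ℂ)).symm (G *ᵥ (WithLp.equiv 2 (Fin b → ℂ)) u) :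
          EuclideanSpace ℂ (Fin a))‖ = specNorm G := by
  set T := (Matrix.toEuclideanLin G).toContinuousLinearMap with hT
  have happ : ∀ x : EuclideanSpace ℂ (Fin b),
      T x = (WithLp.equiv 2 (Fin a → ℂ)).symm (G *ᵥ (WithLp.equiv 2 (Fin b → ℂ)) x) := by
    intro x
    rw [hT, LinearMap.coe_toContinuousLinearMap' (Matrix.toEuclideanLin G)]
    exact Matrix.toEuclideanLin_apply G x
  have hTnorm : specNorm G = ‖T‖ := rfl
  have hT0 : T ≠ 0 := by
    intro h0
    rw [hTnorm, h0, norm_zero] at h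
    exact lt_irrefl _ h
  obtain ⟨x, hx⟩ : ∃ x, T x ≠ 0 := by
    by_contra hcon
    push_neg at hcon
    exact hT0 (ContinuousLinearMap.ext fun y => by simp [hcon y])
  have hx0 : x ≠ 0 := fun hx0 => hx (by simp [hx0])
  have hsne : (Metric.sphere (0 : EuclideanSpace ℂ (Fin b)) 1).Nonempty := by
    refine ⟨‖x‖⁻¹ • x, ?_⟩
    rw [mem_sphere_zero_iff_norm, norm_smul, norm_inv, norm_norm,
      inv_mul_cancel₀ (norm_ne_zero_iff.mpr hx0)]
  obtain ⟨u, huS, hmax'⟩ := (isCompact_sphere (0 : EuclideanSpace ℂ (Fin b)) 1).exists_isMaxOn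
    hsne ((continuous_norm.comp T.continuous).continuousOn)
  have hmax : ∀ y ∈ Metric.sphere (0 : EuclideanSpace ℂ (Fin b)) 1,
      ‖T y‖ ≤ ‖T u‖ := fun y hy => hmax' hy
  have hu1 : ‖u‖ = 1 := mem_sphere_zero_iff_norm.mp huS
  have hle : ‖T‖ ≤ ‖T u‖ := by
    refine T.opNorm_le_bound (norm_nonneg _) fun y => ?_
    rcases eq_or_ne y 0 with rfl | hy
    · simp
    · have hyn : ‖y‖ ≠ 0 := norm_ne_zero_iff.mpr hy
      have hmem : (((‖y‖ : ℂ))⁻¹ • y) ∈ Metric.sphere (0 : EuclideanSpace ℂ (Fin b)) 1 := by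
        rw [mem_sphere_zero_iff_norm, norm_smul, norm_inv, Complex.norm_real, norm_norm,
          inv_mul_cancel₀ hyn]
      have := hmax _ hmem
      simp only [_root_.map_smul, norm_smul, norm_inv, Complex.norm_real, norm_norm] at this
      calc ‖T y‖ = ‖y‖ * (‖y‖⁻¹ * ‖T y‖) := by field_simp
        _ ≤ ‖y‖ * ‖T u‖ := by exact mul_le_mul_of_nonneg_left this (norm_nonneg y)
        _ = ‖T u‖ * ‖y‖ := mul_comm _ _
  have hge : ‖T u‖ ≤ ‖T‖ := by simpa [hu1] using T.le_opNorm u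
  exact ⟨u, hu1, by rw [← happ, hTnorm]; exact le_antisymm hge hle⟩

lemma rankOne_mulVec {a b : ℕ} (u : EuclideanSpace ℂ (Fin a)) (v : EuclideanSpace ℂ (Fin b))
    (y : EuclideanSpace ℂ (Fin b)) :
    (Matrix.of fun i j => u i * conj (v j)) *ᵥ (WithLp.equiv 2 (Fin b → ℂ)) y
      = (WithLp.equiv 2 (Fin a → ℂ)) ((inner ℂ v y : ℂ) • u) := by
  funext i
  simp only [Matrix.mulVec, dotProduct, Matrix.of_apply, WithLp.equiv, Equiv.coe_fn_mk,
    WithLp.ofLp_smul, PiLp.smul_apply, Pi.smul_apply, smul_eq_mul, PiLp.inner_apply, RCLike.inner_apply,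
    Finset.sum_mul]
  exact Finset.sum_congr rfl fun j _ => by ring

lemma specNorm_rankOne_le {a b : ℕ} (u : EuclideanSpace ℂ (Fin a)) (v : EuclideanSpace ℂ (Fin b)) :
    specNorm (Matrix.of fun i j => u i * conj (v j)) ≤ ‖u‖ * ‖v‖ := by
  refine ContinuousLinearMap.opNorm_le_bound _ (mul_nonneg (norm_nonneg u) (norm_nonneg v))
    fun x => ?_
  have happ : (Matrix.toEuclideanLin (Matrix.of fun i j => u i * conj (v j))).toContinuousLinearMap x
      = (WithLp.equiv 2 (Fin a → ℂ)).symm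
          ((Matrix.of fun i j => u i * conj (v j)) *ᵥ (WithLp.equiv 2 (Fin b → ℂ)) x) := by
    rw [LinearMap.coe_toContinuousLinearMap']
    exact Matrix.toEuclideanLin_apply _ x
  rw [happ, rankOne_mulVec, Equiv.symm_apply_apply, norm_smul]
  calc ‖(inner ℂ v x : ℂ)‖ * ‖u‖ ≤ ‖v‖ * ‖x‖ * ‖u‖ :=
        mul_le_mul_of_nonneg_right (norm_inner_le_norm v x) (norm_nonneg u)
    _ = ‖u‖ * ‖v‖ * ‖x‖ := by ring

/-- The master determinant identity. -/
lemma master_identity {n m p : ℕ} (A : Matrix (Fin n) (Fin n) ℂ) (B : Matrix (Fin n) (Fin m) ℂ)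
    (C : Matrix (Fin p) (Fin n) ℂ) (D : Matrix (Fin p) (Fin m) ℂ) (E : Matrix (Fin n) (Fin n) ℂ)
    (z : ℂ) (Δ : Matrix (Fin m) (Fin p) ℂ)
    (hz : (z • E - A).det ≠ 0) (hD : (1 - D * Δ).det ≠ 0) :
    (z • E - pertSys A B C D Δ).det * (1 - D * Δ).det
      = (z • E - A).det * (1 - transferFn A B C D E z * Δ).det := by
  set S := z • E - A with hS
  have hSu : IsUnit S.det := isUnit_iff_ne_zero.mpr hz
  have hDu : IsUnit (1 - D * Δ).det := isUnit_iff_ne_zero.mpr hD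
  have hSi : S * S⁻¹ = 1 := Matrix.mul_nonsing_inv S hSu
  have hDi : (1 - D * Δ)⁻¹ * (1 - D * Δ) = 1 := Matrix.nonsing_inv_mul _ hDu
  have h1 : z • E - pertSys A B C D Δ
      = S * (1 - (S⁻¹ * (B * Δ * (1 - D * Δ)⁻¹)) * C) := by
    rw [Matrix.mul_sub, Matrix.mul_one, ← Matrix.mul_assoc, ← Matrix.mul_assoc, hSi,
      Matrix.one_mul]
    rw [pertSys, hS, sub_sub]
  rw [h1, Matrix.det_mul, Matrix.det_one_sub_mul_comm]
  rw [mul_assoc, ← Matrix.det_mul]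
  congr 2
  have hexp : C * (S⁻¹ * (B * Δ * (1 - D * Δ)⁻¹)) = C * S⁻¹ * B * Δ * (1 - D * Δ)⁻¹ := by
    simp only [Matrix.mul_assoc]
  rw [hexp, Matrix.sub_mul, Matrix.one_mul, Matrix.mul_assoc _ (1 - D * Δ)⁻¹ (1 - D * Δ), hDi,
    Matrix.mul_one, transferFn, ← hS, Matrix.add_mul, sub_sub, add_comm (C * S⁻¹ * B * Δ)]

end Aux

theorem eig_ntf_equivalence {n m p : ℕ} (A : Matrix (Fin n) (Fin n) ℂ)
    (B : Matrix (Fin n) (Fin m) ℂ) (C : Matrix (Fin p) (Fin n) ℂ)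
    (D : Matrix (Fin p) (Fin m) ℂ) (E : Matrix (Fin n) (Fin n) ℂ)
    (hE : IsUnit E) (ε : ℝ) (hε : 0 < ε) (hεD : ε * specNorm D < 1)
    (z : ℂ) (hz : (z • E - A).det ≠ 0) :
    ε⁻¹ ≤ specNorm (transferFn A B C D E z) ↔
      ∃ Δ : Matrix (Fin m) (Fin p) ℂ, specNorm Δ ≤ ε ∧
        (z • E - pertSys A B C D Δ).det = 0 := by
  set G := transferFn A B C D E z with hG
  constructor
  · -- forward
    intro h
    set σ := specNorm G with hσdef
    have hσpos : 0 < σ := lt_of_lt_of_le (inv_pos.mpr hε) h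
    have hσinv : σ⁻¹ ≤ ε := by
      rw [← inv_inv ε]
      exact inv_anti₀ (inv_pos.mpr hε) h
    obtain ⟨u, hu1, hGu⟩ := specNorm_attained G hσpos
    set Gu : EuclideanSpace ℂ (Fin p) :=
      (WithLp.equiv 2 (Fin p → ℂ)).symm (G *ᵥ (WithLp.equiv 2 (Fin m → ℂ)) u) with hGudef
    set v : EuclideanSpace ℂ (Fin p) := ((σ : ℂ))⁻¹ • Gu with hvdef
    have hv1 : ‖v‖ = 1 := by
      rw [hvdef, norm_smul, norm_inv, Complex.norm_real, Real.norm_of_nonneg hσpos.le, hGu,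
        inv_mul_cancel₀ hσpos.ne']
    set u' : EuclideanSpace ℂ (Fin m) := ((σ : ℂ))⁻¹ • u with hu'def
    have hu'norm : ‖u'‖ = σ⁻¹ := by
      rw [hu'def, norm_smul, norm_inv, Complex.norm_real, Real.norm_of_nonneg hσpos.le, hu1,
        mul_one]
    set Δ : Matrix (Fin m) (Fin p) ℂ := Matrix.of fun i j => u' i * conj (v j) with hΔdef
    have hΔnorm : specNorm Δ ≤ σ⁻¹ := by
      have := specNorm_rankOne_le u' v
      rwa [hu'norm, hv1, mul_one] at this
    have hΔε : specNorm Δ ≤ ε := hΔnorm.trans hσinv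
    refine ⟨Δ, hΔε, ?_⟩
    have hDdet : (1 - D * Δ).det ≠ 0 := by
      refine det_one_sub_ne_zero _ ?_
      calc specNorm (D * Δ) ≤ specNorm D * specNorm Δ := specNorm_mul_le D Δ
        _ ≤ specNorm D * ε :=
            mul_le_mul_of_nonneg_left hΔε (specNorm_nonneg D)
        _ = ε * specNorm D := mul_comm _ _
        _ < 1 := hεD
    -- key: det (1 - G * Δ) = 0 with eigenvector v
    have hGΔv : (1 - G * Δ) *ᵥ (WithLp.equiv 2 (Fin p → ℂ)) v = 0 := by
      have hΔv : Δ *ᵥ (WithLp.equiv 2 (Fin p → ℂ)) v = (WithLp.equiv 2 (Fin m → ℂ)) u' := by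
        rw [hΔdef, rankOne_mulVec]
        congr 1
        have : (inner ℂ v v : ℂ) = 1 := by
          rw [inner_self_eq_norm_sq_to_K, hv1]; norm_num
        rw [this, one_smul]
      have hGu' : G *ᵥ (WithLp.equiv 2 (Fin m → ℂ)) u' = (WithLp.equiv 2 (Fin p → ℂ)) v := by
        show G *ᵥ WithLp.ofLp (((σ : ℂ))⁻¹ • u) = WithLp.ofLp (((σ : ℂ))⁻¹ • Gu)
        rw [WithLp.ofLp_smul, Matrix.mulVec_smul, WithLp.ofLp_smul]
        rw [hGudef, WithLp.equiv_symm_apply, WithLp.ofLp_toLp]; rfl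
      rw [Matrix.sub_mulVec, Matrix.one_mulVec, ← Matrix.mulVec_mulVec, hΔv, hGu', sub_self]
    have hdetGΔ : (1 - G * Δ).det = 0 := by
      rw [← Matrix.exists_mulVec_eq_zero_iff]
      refine ⟨(WithLp.equiv 2 (Fin p → ℂ)) v, ?_, hGΔv⟩
      intro hcon
      have : v = 0 := (WithLp.equiv 2 (Fin p → ℂ)).injective (by simpa using hcon)
      rw [this, norm_zero] at hv1
      norm_num at hv1
    have := master_identity A B C D E z Δ hz hDdet
    rw [← hG, hdetGΔ, mul_zero] at this
    exact (mul_eq_zero.mp this).resolve_right hDdet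
  · -- backward
    rintro ⟨Δ, hΔ, hdet⟩
    by_contra hcon
    push_neg at hcon
    have hGn : specNorm G < ε⁻¹ := hcon
    have hDdet : (1 - D * Δ).det ≠ 0 := by
      refine det_one_sub_ne_zero _ ?_
      calc specNorm (D * Δ) ≤ specNorm D * specNorm Δ := specNorm_mul_le D Δ
        _ ≤ specNorm D * ε := mul_le_mul_of_nonneg_left hΔ (specNorm_nonneg D)
        _ = ε * specNorm D := mul_comm _ _
        _ < 1 := hεD
    have hGΔ : specNorm (G * Δ) < 1 := by
      calc specNorm (G * Δ) ≤ specNorm G * specNorm Δ := specNorm_mul_le G Δ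
        _ ≤ specNorm G * ε :=
            mul_le_mul_of_nonneg_left hΔ (specNorm_nonneg G)
        _ < ε⁻¹ * ε := by
            apply mul_lt_mul_of_pos_right hGn hε
        _ = 1 := inv_mul_cancel₀ hε.ne'
    have := master_identity A B C D E z Δ hz hDdet
    rw [hdet, zero_mul, ← hG] at this
    have h2 : (1 - G * Δ).det ≠ 0 := det_one_sub_ne_zero _ hGΔ
    exact h2 ((mul_eq_zero.mp this.symm).resolve_left hz)
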